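/- arXiv:2111.09196 — 2 statements merged into one kernel-verified Lean document; each statement's English description precedes it below -/
import Mathlib

section
/- Every doubling measure $\mu$ on $\mathbb{Z}$ (with the metric $d(m,n)=|m-n|$ and positive weights $a_n = \mu(n)$) satisfies $C^0_\mu = \sup_{n} \frac{a_{n-1}+a_n+a_{n+1}}{a_n} \ge 3$. Consequently, $C_{\mathbb{Z}} = C^0_{\mathbb{Z}} = 3$. -/
open Finset

/-- The closed ball of center `n` and radius `k` in `ℤ` (infinite path graph). -/
noncomputable def zball (n : ℤ) (k : ℕ) : Finset ℤ := Finset.Icc (n - k) (n + k)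

/-- The set of doubling quotients of a weight `μ` on `ℤ`. -/
def ratioSet (μ : ℤ → ℝ) : Set ℝ :=
  {x | ∃ (n : ℤ) (k : ℕ),
    x = (∑ i ∈ zball n (2 * k + 1), μ i) / (∑ i ∈ zball n k, μ i)}

/-- The set of radius-one doubling quotients of a weight `μ` on `ℤ`. -/
def ratio0Set (μ : ℤ → ℝ) : Set ℝ :=
  {x | ∃ n : ℤ, x = (μ (n - 1) + μ n + μ (n + 1)) / μ n}

lemma sum_Icc3 (f : ℤ → ℝ) (n : ℤ) :
    ∑ i ∈ Finset.Icc (n - 1) (n + 1), f i = f (n - 1) + f n + f (n + 1) := by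
  have h : Finset.Icc (n - 1) (n + 1) = {n - 1, n, n + 1} := by
    ext x; simp only [Finset.mem_Icc, Finset.mem_insert, Finset.mem_singleton]; omega
  rw [h, Finset.sum_insert (by simp only [Finset.mem_insert, Finset.mem_singleton]; omega),
    Finset.sum_insert (by simp only [Finset.mem_singleton]; omega), Finset.sum_singleton]
  ring

lemma ratio0_subset (μ : ℤ → ℝ) : ratio0Set μ ⊆ ratioSet μ := by
  rintro x ⟨n, hx⟩
  refine ⟨n, 0, ?_⟩
  have h1 : zball n (2 * 0 + 1) = Finset.Icc (n - 1) (n + 1) := by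
    simp [zball]
  have h0 : zball n 0 = Finset.Icc n n := by simp [zball]
  rw [h1, h0, sum_Icc3, Finset.Icc_self, Finset.sum_singleton, hx]

lemma ratio0_nonempty (μ : ℤ → ℝ) : (ratio0Set μ).Nonempty :=
  ⟨_, ⟨0, rfl⟩⟩

/-- The main lower bound: `C⁰_μ ≥ 3`. -/
lemma main_lb (μ : ℤ → ℝ) (hpos : ∀ n, 0 < μ n) (hbdd : BddAbove (ratioSet μ)) :
    3 ≤ sSup (ratio0Set μ) := by
  by_contra hcon
  push_neg at hcon
  set s := sSup (ratio0Set μ) with hs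
  have hbdd0 : BddAbove (ratio0Set μ) := hbdd.mono (ratio0_subset μ)
  have key : ∀ n : ℤ, μ (n - 1) + μ n + μ (n + 1) ≤ s * μ n := by
    intro n
    have hx : (μ (n - 1) + μ n + μ (n + 1)) / μ n ∈ ratio0Set μ := ⟨n, rfl⟩
    have h := le_csSup hbdd0 hx
    rwa [div_le_iff₀ (hpos n)] at h
  set δ := 3 - s with hδ
  have hδpos : 0 < δ := by simp only [hδ]; linarith
  -- difference sequence
  set b : ℤ → ℝ := fun m => μ (m + 1) - μ m with hb
  have step : ∀ m : ℤ, b m ≤ b (m - 1) - δ * μ m := by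
    intro m
    have h := key m
    simp only [hb, hδ]
    have : m - 1 + 1 = m := by ring
    rw [this]
    linarith
  have anti : ∀ (n : ℤ) (k : ℕ), b (n + k) ≤ b n := by
    intro n k
    induction k with
    | zero => simp
    | succ k ih =>
      have h := step (n + k + 1)
      have e1 : n + k + 1 - 1 = n + k := by ring
      have e2 : (n + ((k : ℤ) + 1)) = n + k + 1 := by ring
      rw [e1] at h
      push_cast
      rw [e2]
      nlinarith [hpos (n + k + 1)]
  have bnonneg : ∀ n : ℤ, 0 ≤ b n := by
    intro N
    by_contra hneg
    push_neg at hneg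
    have tele : ∀ k : ℕ, μ (N + 1 + k) ≤ μ (N + 1) + k * b N := by
      intro k
      induction k with
      | zero => simp
      | succ k ih =>
        have hanti := anti N (k + 1)
        have e2 : (N + ((k : ℤ) + 1)) = N + 1 + k := by ring
        push_cast at hanti
        rw [e2] at hanti
        have e3 : (N + 1 + ((k : ℤ) + 1)) = (N + 1 + k) + 1 := by ring
        push_cast
        rw [e3]
        have : μ (N + 1 + k + 1) = μ (N + 1 + k) + b (N + 1 + k) := by
          simp [hb]
        rw [this]
        nlinarith
    obtain ⟨k, hk⟩ := exists_nat_gt (μ (N + 1) / (-b N))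
    have hk' : μ (N + 1) < k * (-b N) := by
      rwa [div_lt_iff₀ (by linarith)] at hk
    have := tele k
    have hp := hpos (N + 1 + k)
    nlinarith
  have mono : ∀ (n : ℤ) (k : ℕ), μ n ≤ μ (n + k) := by
    intro n k
    induction k with
    | zero => simp
    | succ k ih =>
      have h := bnonneg (n + k)
      have e : (n + ((k : ℤ) + 1)) = (n + k) + 1 := by ring
      push_cast
      rw [e]
      simp only [hb] at h
      linarith
  have tele2 : ∀ k : ℕ, b k ≤ b 0 - δ * (k * μ 0) := by
    intro k
    induction k with
    | zero => simp
    | succ k ih =>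
      have h := step ((k : ℤ) + 1)
      have e1 : (k : ℤ) + 1 - 1 = (k : ℤ) := by ring
      rw [e1] at h
      have hm := mono 0 (k + 1)
      have e2 : ((0 : ℤ) + ((k : ℤ) + 1)) = (k : ℤ) + 1 := by ring
      push_cast at hm
      rw [e2] at hm
      push_cast
      nlinarith [hpos 0]
  obtain ⟨k, hk⟩ := exists_nat_gt (b 0 / (δ * μ 0))
  have hδμ : 0 < δ * μ 0 := mul_pos hδpos (hpos 0)
  have hk' : b 0 < k * (δ * μ 0) := by
    rwa [div_lt_iff₀ hδμ] at hk
  have h1 := tele2 k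
  have h2 := bnonneg (k : ℤ)
  nlinarith

lemma zball_sum_one (n : ℤ) (k : ℕ) : ∑ i ∈ zball n k, (1 : ℝ) = 2 * k + 1 := by
  rw [zball, Finset.sum_const, Int.card_Icc]
  have h : n + (k : ℤ) + 1 - (n - (k : ℤ)) = 2 * k + 1 := by ring
  rw [h]
  have : ((2 * (k : ℤ) + 1).toNat : ℝ) = 2 * k + 1 := by
    have : (2 * (k : ℤ) + 1).toNat = 2 * k + 1 := by omega
    rw [this]; push_cast; ring
  simp [this]

lemma one_ratioSet : ratioSet (fun _ => (1 : ℝ)) = {x : ℝ | ∃ k : ℕ, x = (4 * (k:ℝ) + 3) / (2 * k + 1)} := by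
  ext x
  constructor
  · rintro ⟨n, k, hx⟩
    refine ⟨k, ?_⟩
    rw [hx, zball_sum_one, zball_sum_one]
    push_cast; ring_nf
  · rintro ⟨k, hx⟩
    refine ⟨0, k, ?_⟩
    rw [hx, zball_sum_one, zball_sum_one]
    push_cast; ring_nf

lemma one_sSup_ratioSet : sSup (ratioSet (fun _ => (1 : ℝ))) = 3 := by
  rw [one_ratioSet]
  have hmem : (3:ℝ) ∈ {x : ℝ | ∃ k : ℕ, x = (4 * (k:ℝ) + 3) / (2 * k + 1)} := ⟨0, by norm_num⟩
  apply le_antisymm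
  · apply csSup_le ⟨3, hmem⟩
    rintro x ⟨k, hx⟩
    rw [hx, div_le_iff₀ (by positivity)]
    have : (0 : ℝ) ≤ k := Nat.cast_nonneg k
    linarith
  · apply le_csSup
    · refine ⟨3, ?_⟩
      rintro x ⟨k, hx⟩
      rw [hx, div_le_iff₀ (by positivity)]
      have : (0 : ℝ) ≤ k := Nat.cast_nonneg k
      linarith
    · exact hmem

lemma one_bddAbove : BddAbove (ratioSet (fun _ => (1 : ℝ))) := by
  rw [one_ratioSet]
  refine ⟨3, ?_⟩
  rintro x ⟨k, hx⟩
  rw [hx, div_le_iff₀ (by positivity)]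
  have : (0 : ℝ) ≤ k := Nat.cast_nonneg k
  linarith

lemma one_sSup_ratio0Set : sSup (ratio0Set (fun _ => (1 : ℝ))) = 3 := by
  have h : ratio0Set (fun _ => (1 : ℝ)) = {3} := by
    ext x
    simp only [ratio0Set, Set.mem_setOf_eq, Set.mem_singleton_iff]
    constructor
    · rintro ⟨n, hx⟩; rw [hx]; norm_num
    · intro hx; exact ⟨0, by norm_num [hx]⟩
  rw [h, csSup_singleton]

/-- Every doubling measure `μ` on `ℤ` satisfies `C⁰_μ ≥ 3`; consequently
`C_ℤ = C⁰_ℤ = 3`. -/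
theorem stmt_9 :
    (∀ μ : ℤ → ℝ, (∀ n, 0 < μ n) → BddAbove (ratioSet μ) →
      3 ≤ sSup (ratio0Set μ)) ∧
    sInf {c | ∃ μ : ℤ → ℝ, (∀ n, 0 < μ n) ∧ BddAbove (ratioSet μ) ∧
      c = sSup (ratioSet μ)} = 3 ∧
    sInf {c | ∃ μ : ℤ → ℝ, (∀ n, 0 < μ n) ∧ BddAbove (ratioSet μ) ∧
      c = sSup (ratio0Set μ)} = 3 := by
  refine ⟨main_lb, ?_, ?_⟩
  · apply le_antisymm
    · refine csInf_le ⟨3, ?_⟩ (⟨fun _ => 1, fun _ => one_pos, one_bddAbove, one_sSup_ratioSet.symm⟩ :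
        (3:ℝ) ∈ {c | ∃ μ : ℤ → ℝ, (∀ n, 0 < μ n) ∧ BddAbove (ratioSet μ) ∧ c = sSup (ratioSet μ)})
      rintro c ⟨μ, hpos, hbdd, hc⟩
      have h0 := main_lb μ hpos hbdd
      have hle : sSup (ratio0Set μ) ≤ sSup (ratioSet μ) :=
        csSup_le_csSup hbdd (ratio0_nonempty μ) (ratio0_subset μ)
      rw [hc]; linarith
    · apply le_csInf (⟨3, fun _ => 1, fun _ => one_pos, one_bddAbove, one_sSup_ratioSet.symm⟩ :
        Set.Nonempty {c | ∃ μ : ℤ → ℝ, (∀ n, 0 < μ n) ∧ BddAbove (ratioSet μ) ∧ c = sSup (ratioSet μ)})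
      rintro c ⟨μ, hpos, hbdd, hc⟩
      have h0 := main_lb μ hpos hbdd
      have hle : sSup (ratio0Set μ) ≤ sSup (ratioSet μ) :=
        csSup_le_csSup hbdd (ratio0_nonempty μ) (ratio0_subset μ)
      rw [hc]; linarith
  · apply le_antisymm
    · refine csInf_le ⟨3, ?_⟩ (⟨fun _ => 1, fun _ => one_pos, one_bddAbove, one_sSup_ratio0Set.symm⟩ :
        (3:ℝ) ∈ {c | ∃ μ : ℤ → ℝ, (∀ n, 0 < μ n) ∧ BddAbove (ratioSet μ) ∧ c = sSup (ratio0Set μ)})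
      rintro c ⟨μ, hpos, hbdd, hc⟩
      rw [hc]; exact main_lb μ hpos hbdd
    · apply le_csInf (⟨3, fun _ => 1, fun _ => one_pos, one_bddAbove, one_sSup_ratio0Set.symm⟩ :
        Set.Nonempty {c | ∃ μ : ℤ → ℝ, (∀ n, 0 < μ n) ∧ BddAbove (ratioSet μ) ∧ c = sSup (ratio0Set μ)})
      rintro c ⟨μ, hpos, hbdd, hc⟩
      rw [hc]; exact main_lb μ hpos hbdd
end

section
/- A positive weight function $\mu$ on $\mathbb{Z}$ is a doubling minimizer (i.e., $C_\mu = C_{\mathbb{Z}} = 3$) if and only if $\mu$ is constant. -/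
open Finset

lemma zball_sum_const (c : ℝ) (n : ℤ) (k : ℕ) :
    ∑ _i ∈ zball n k, c = (2 * (k : ℝ) + 1) * c := by
  rw [zball, Finset.sum_const, Int.card_Icc]
  have h : (n + (k : ℤ) + 1 - (n - (k : ℤ))) = ((2 * k + 1 : ℕ) : ℤ) := by push_cast; ring
  rw [h, Int.toNat_natCast, nsmul_eq_mul]
  push_cast; ring

lemma zball_one (n : ℤ) (μ : ℤ → ℝ) :
    ∑ i ∈ zball n 1, μ i = μ (n - 1) + μ n + μ (n + 1) := by
  have hset : zball n 1 = {n - 1, n, n + 1} := by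
    ext x; simp [zball, Finset.mem_Icc]; omega
  rw [hset, Finset.sum_insert (by simp only [Finset.mem_insert, Finset.mem_singleton]; omega),
    Finset.sum_insert (by simp only [Finset.mem_singleton]; omega), Finset.sum_singleton]
  ring

lemma zball_zero (n : ℤ) (μ : ℤ → ℝ) : ∑ i ∈ zball n 0, μ i = μ n := by
  have hset : zball n 0 = {n} := by ext x; simp [zball, Finset.mem_Icc]
  rw [hset, Finset.sum_singleton]

/-- A positive concave function on ℤ is constant (successor step). -/
lemma concave_const (μ : ℤ → ℝ) (hμ : ∀ n, 0 < μ n)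
    (hconc : ∀ j : ℤ, μ (j - 1) + μ j + μ (j + 1) ≤ 3 * μ j) :
    ∀ n : ℤ, μ (n + 1) = μ n := by
  set d : ℤ → ℝ := fun n => μ (n + 1) - μ n with hd
  have hstep : ∀ n : ℤ, d (n + 1) ≤ d n := by
    intro n
    have h := hconc (n + 1)
    rw [add_sub_cancel_right] at h
    simp only [hd]
    linarith
  have hant : Antitone d := antitone_int_of_succ_le hstep
  -- d n ≥ 0 for all n
  have hnonneg : ∀ n : ℤ, 0 ≤ d n := by
    intro n0
    by_contra hlt
    push_neg at hlt
    have key : ∀ m : ℕ, μ (n0 + 1 + m) ≤ μ (n0 + 1) + m * d n0 := by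
      intro m
      induction m with
      | zero => simp
      | succ m ih =>
        have h1 : d (n0 + 1 + m) ≤ d n0 := hant (by omega)
        have h2 : μ (n0 + 1 + (m + 1 : ℕ)) = μ (n0 + 1 + m) + d (n0 + 1 + m) := by
          simp only [hd]; push_cast; ring_nf
        rw [h2]; push_cast; nlinarith
    obtain ⟨m, hm⟩ := exists_nat_gt (μ (n0 + 1) / (-d n0))
    have hmd : μ (n0 + 1) < m * (-d n0) := by
      rw [div_lt_iff₀ (by linarith)] at hm; linarith
    have := key m
    have := hμ (n0 + 1 + m)
    nlinarith
  -- d n ≤ 0 for all n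
  have hnonpos : ∀ n : ℤ, d n ≤ 0 := by
    intro n0
    by_contra hlt
    push_neg at hlt
    have key : ∀ m : ℕ, μ (n0 - m) ≤ μ n0 - m * d n0 := by
      intro m
      induction m with
      | zero => simp
      | succ m ih =>
        have h1 : d n0 ≤ d (n0 - m - 1) := hant (by omega)
        have h2 : μ (n0 - (m + 1 : ℕ)) = μ (n0 - m) - d (n0 - m - 1) := by
          simp only [hd]; push_cast; ring_nf
        rw [h2]; push_cast; nlinarith
    obtain ⟨m, hm⟩ := exists_nat_gt (μ n0 / d n0)
    have hmd : μ n0 < m * d n0 := by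
      rw [div_lt_iff₀ hlt] at hm; linarith
    have := key m
    have := hμ (n0 - m)
    nlinarith
  intro n
  have h1 := hnonneg n
  have h2 := hnonpos n
  have : d n = 0 := le_antisymm h2 h1
  simp only [hd] at this
  linarith

/-- A positive weight `μ` on `ℤ` is a doubling minimizer, i.e. `C_μ = C_ℤ = 3`,
if and only if `μ` is constant. -/
theorem stmt_13 (μ : ℤ → ℝ) (hμ : ∀ n, 0 < μ n) :
    sSup (ratioSet μ) = 3 ↔ ∀ m n : ℤ, μ m = μ n := by
  constructor
  · intro hsup m n
    have hbdd : BddAbove (ratioSet μ) := by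
      by_contra hb
      rw [Real.sSup_of_not_bddAbove hb] at hsup
      norm_num at hsup
    have hub : ∀ x ∈ ratioSet μ, x ≤ 3 := by
      intro x hx
      have := le_csSup hbdd hx
      rw [hsup] at this; exact this
    have hconc : ∀ j : ℤ, μ (j - 1) + μ j + μ (j + 1) ≤ 3 * μ j := by
      intro j
      have hx : (∑ i ∈ zball j (2 * 0 + 1), μ i) / (∑ i ∈ zball j 0, μ i) ∈ ratioSet μ :=
        ⟨j, 0, rfl⟩
      have h3 := hub _ hx
      rw [zball_zero] at h3
      have hpos := hμ j
      rw [div_le_iff₀ hpos] at h3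
      have : (2 * 0 + 1 : ℕ) = 1 := rfl
      rw [this, zball_one] at h3
      linarith
    have hsucc := concave_const μ hμ hconc
    -- μ n = μ 0 for all n
    have hzero : ∀ j : ℤ, μ j = μ 0 := by
      intro j
      induction j using Int.induction_on with
      | zero => rfl
      | succ k ih => rw [hsucc k, ih]
      | pred k ih => rw [← ih, ← hsucc (-k - 1)]; norm_num
    rw [hzero m, hzero n]
  · intro hconst
    set c := μ 0 with hc
    have hcall : ∀ j : ℤ, μ j = c := fun j => hconst j 0
    have hcpos : 0 < c := hμ 0
    have hsum : ∀ (j : ℤ) (k : ℕ), ∑ i ∈ zball j k, μ i = (2 * (k : ℝ) + 1) * c := by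
      intro j k
      rw [show (∑ i ∈ zball j k, μ i) = ∑ _i ∈ zball j k, c from
        Finset.sum_congr rfl fun i _ => hcall i]
      exact zball_sum_const c j k
    have hub : ∀ x ∈ ratioSet μ, x ≤ 3 := by
      rintro x ⟨j, k, rfl⟩
      rw [hsum, hsum]
      rw [div_le_iff₀ (by positivity)]
      push_cast
      nlinarith
    have hmem : (3 : ℝ) ∈ ratioSet μ := by
      refine ⟨0, 0, ?_⟩
      rw [hsum, hsum]
      norm_num
      field_simp
    exact le_antisymm (csSup_le ⟨3, hmem⟩ hub) (le_csSup ⟨3, hub⟩ hmem)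
end
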